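/- Let (C, {·,·}) be a Poisson algebra over a commutative ring k that is an integral domain, and let A be a k-subalgebra of C that is closed under the bracket ({A, A} ⊆ A), is integrally closed in its fraction field, and is such that C is a finitely generated A-module. Then tr_{C/A}({a, c}) = {a, tr_{C/A}(c)} for all a ∈ A and c ∈ C; that is, (C, A, ∂^res, tr_{C/A}) is a Poisson trace order, where ∂^res_a = {a, ·}. -/
import Mathlib

/-- A derivation-like map on a domain extends to its fraction field. -/
theorem deriv_extend_frac {R F : Type*} [CommRing R] [IsDomain R] [Field F] [Algebra R F]
    [IsFractionRing R F] (d : R → F)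
    (hadd : ∀ x y, d (x + y) = d x + d y)
    (hmul : ∀ x y, d (x * y) = d x * algebraMap R F y + algebraMap R F x * d y) :
    ∃ E : F → F, (∀ x y, E (x + y) = E x + E y) ∧
      (∀ x y, E (x * y) = E x * y + x * E y) ∧
      ∀ r, E (algebraMap R F r) = d r := by
  classical
  set ι := algebraMap R F with hι
  have hinj : Function.Injective ι := IsFractionRing.injective R F
  have hne : ∀ y : nonZeroDivisors R, ι (y : R) ≠ 0 := fun y =>
    (map_ne_zero_iff ι hinj).mpr (nonZeroDivisors.coe_ne_zero y)
  have hd1 : d 1 = 0 := by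
    have h := hmul 1 1
    rw [one_mul, map_one, mul_one, one_mul] at h
    linear_combination -h
  choose p hp using fun z : F => IsLocalization.surj (nonZeroDivisors R) z
  obtain ⟨E, hchar⟩ : ∃ E : F → F, ∀ (z : F) (x : R) (y : nonZeroDivisors R),
      z * ι (y : R) = ι x → E z * ι (y : R) = d x - z * d (y : R) := by
    refine ⟨fun z => (d (p z).1 - z * d ((p z).2 : R)) * (ι ((p z).2 : R))⁻¹, ?_⟩
    intro z x y h1
    have hpz := hp z
    have hxy : x * ((p z).2 : R) = (p z).1 * (y : R) := by
      apply hinj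
      rw [map_mul, map_mul, ← h1, ← hpz]
      ring
    have hd : d x * ι ((p z).2 : R) + ι x * d ((p z).2 : R)
        = d (p z).1 * ι (y : R) + ι (p z).1 * d (y : R) := by
      have := congrArg d hxy
      rw [hmul, hmul] at this
      linear_combination this
    have hnz := hne (p z).2
    field_simp
    linear_combination -hd - d ((p z).2 : R) * h1 + d (y : R) * hpz
  have hmap : ∀ r, E (ι r) = d r := by
    intro r
    have h := hchar (ι r) r 1 (by rw [OneMemClass.coe_one, map_one, mul_one])
    rw [OneMemClass.coe_one, map_one, mul_one] at h
    rw [h, hd1, mul_zero, sub_zero]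
  refine ⟨E, ?_, ?_, hmap⟩
  · intro z w
    obtain ⟨⟨x, y⟩, hz⟩ : ∃ q : R × nonZeroDivisors R, z * ι (q.2 : R) = ι q.1 := ⟨p z, hp z⟩
    obtain ⟨⟨x', y'⟩, hw⟩ : ∃ q : R × nonZeroDivisors R, w * ι (q.2 : R) = ι q.1 := ⟨p w, hp w⟩
    have hrep : (z + w) * ι ((y * y' : nonZeroDivisors R) : R) = ι (x * y' + x' * y) := by
      rw [Submonoid.coe_mul, map_mul, map_add, map_mul, map_mul]
      linear_combination ι (y' : R) * hz + ι (y : R) * hw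
    have h1 := hchar (z + w) _ _ hrep
    rw [Submonoid.coe_mul, map_mul] at h1
    have h2 := hchar z x y hz
    have h3 := hchar w x' y' hw
    apply mul_right_cancel₀ (mul_ne_zero (hne y) (hne y'))
    rw [hadd, hmul, hmul, hmul] at h1
    linear_combination h1 - ι (y' : R) * h2 - ι (y : R) * h3 - d (y' : R) * hz - d (y : R) * hw
  · intro z w
    obtain ⟨⟨x, y⟩, hz⟩ : ∃ q : R × nonZeroDivisors R, z * ι (q.2 : R) = ι q.1 := ⟨p z, hp z⟩
    obtain ⟨⟨x', y'⟩, hw⟩ : ∃ q : R × nonZeroDivisors R, w * ι (q.2 : R) = ι q.1 := ⟨p w, hp w⟩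
    have hrep : (z * w) * ι ((y * y' : nonZeroDivisors R) : R) = ι (x * x') := by
      rw [Submonoid.coe_mul, map_mul, map_mul]
      calc z * w * (ι (y : R) * ι (y' : R)) = (z * ι (y : R)) * (w * ι (y' : R)) := by ring
        _ = ι x * ι x' := by rw [hz, hw]
    have h1 := hchar (z * w) _ _ hrep
    rw [Submonoid.coe_mul, map_mul] at h1
    have h2 := hchar z x y hz
    have h3 := hchar w x' y' hw
    apply mul_right_cancel₀ (mul_ne_zero (hne y) (hne y'))
    rw [hmul, hmul] at h1
    linear_combination h1 - (w * ι (y' : R)) * h2 - (z * ι (y : R)) * h3 - d x' * hz - d x * hw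
theorem trace_deriv_comm {K L : Type*} [Field K] [Field L] [Algebra K L]
    [FiniteDimensional K L] (E : L → L)
    (hEadd : ∀ x y, E (x + y) = E x + E y)
    (hEmul : ∀ x y, E (x * y) = E x * y + x * E y)
    (e : K → K) (headd : ∀ x y, e (x + y) = e x + e y)
    (hcompat : ∀ κ : K, E (algebraMap K L κ) = algebraMap K L (e κ)) (x : L) :
    Algebra.trace K L (E x) = e (Algebra.trace K L x) := by
  classical
  let Eh : L →+ L := AddMonoidHom.mk' E hEadd
  let eh : K →+ K := AddMonoidHom.mk' e headd
  let b := Module.finBasis K L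
  have hsmul : ∀ (κ : K) (v : L), E (κ • v) = e κ • v + κ • E v := by
    intro κ v
    rw [Algebra.smul_def, hEmul, hcompat, Algebra.smul_def, Algebra.smul_def]
  set M : _ → _ → K := fun i j => b.repr (x * b j) i with hM
  set N : _ → _ → K := fun i j => b.repr (E (b j)) i with hN
  have key : ∀ j, E x * b j
      = (∑ i, e (M i j) • b i) + ((∑ i, M i j • E (b i)) - x * E (b j)) := by
    intro j
    have h1 : E (x * b j) = E x * b j + x * E (b j) := hEmul x (b j)
    have h2 : E (x * b j) = (∑ i, e (M i j) • b i) + ∑ i, M i j • E (b i) := by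
      conv_lhs => rw [← b.sum_repr (x * b j)]
      rw [show E (∑ i, b.repr (x * b j) i • b i) = ∑ i, E (b.repr (x * b j) i • b i)
        from map_sum Eh _ _, ← Finset.sum_add_distrib]
      exact Finset.sum_congr rfl fun i _ => hsmul _ (b i)
    linear_combination h2 - h1
  have htr : ∀ z : L, Algebra.trace K L z = ∑ j, b.repr (z * b j) j := by
    intro z
    rw [Algebra.trace_eq_matrix_trace b z, Matrix.trace]
    exact Finset.sum_congr rfl fun j _ => by
      rw [Matrix.diag_apply, Algebra.leftMulMatrix_eq_repr_mul]
  rw [htr, htr]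
  have hrepr : ∀ j, b.repr (E x * b j) j
      = e (M j j) + ((∑ i, M i j * N j i) - ∑ i, N i j * M j i) := by
    intro j
    have e1 : b.repr (∑ i, e (M i j) • b i) j = e (M j j) := by
      exact congrFun (b.repr_sum_self _) j
    have e2 : b.repr (∑ i, M i j • E (b i)) j = ∑ i, M i j * N j i := by
      simp only [map_sum, map_smul, Finsupp.coe_finset_sum, Finset.sum_apply,
        Finsupp.smul_apply, smul_eq_mul, hN]
    have e3 : b.repr (x * E (b j)) j = ∑ i, N i j * M j i := by
      conv_lhs => rw [show E (b j) = ∑ i, N i j • b i by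
        simp only [hN]; exact (b.sum_repr (E (b j))).symm]
      rw [Finset.mul_sum]
      simp only [mul_smul_comm, map_sum, map_smul, Finsupp.coe_finset_sum, Finset.sum_apply,
        Finsupp.smul_apply, smul_eq_mul, hM]
    rw [key j, map_add, map_sub, Finsupp.add_apply, Finsupp.sub_apply, e1, e2, e3]
  calc ∑ j, b.repr (E x * b j) j
      = ∑ j, (e (M j j) + ((∑ i, M i j * N j i) - ∑ i, N i j * M j i)) :=
        Finset.sum_congr rfl fun j _ => hrepr j
    _ = ∑ j, e (M j j) := by
        rw [Finset.sum_add_distrib, Finset.sum_sub_distrib]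
        rw [Finset.sum_comm (f := fun j i => M i j * N j i)]
        simp [mul_comm]
    _ = e (∑ j, M j j) := (map_sum eh _ _).symm
    _ = e (∑ j, b.repr (x * b j) j) := rfl


/-- Let `(C, {·,·})` be a Poisson algebra over `k` that is an integral domain, and let
`A` be a `k`-subalgebra with `{A, A} ⊆ A`, integrally closed in its fraction field `K`,
with `C` a finitely generated `A`-module. Then `(C, A, ∂^res, tr_{C/A})` is a Poisson
trace order: `tr_{C/A}({a, c}) = {a, tr_{C/A}(c)}` for all `a ∈ A`, `c ∈ C`. -/
theorem poissonAlgebraExtension_traceOrder {k A C K L : Type*} [CommRing k]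
    [CommRing A] [IsDomain A] [Algebra k A]
    [CommRing C] [IsDomain C] [Algebra k C]
    [Algebra A C] [IsScalarTower k A C]
    (hinj : Function.Injective (algebraMap A C))
    [Module.Finite A C] [IsIntegrallyClosed A]
    [Field K] [Algebra A K] [IsFractionRing A K]
    [Field L] [Algebra C L] [IsFractionRing C L]
    [Algebra A L] [Algebra K L] [IsScalarTower A C L] [IsScalarTower A K L]
    [FiniteDimensional K L]
    -- the Poisson bracket on `C`
    (bracket : C →ₗ[k] C →ₗ[k] C)
    (hanti : ∀ a b : C, bracket a b = - bracket b a)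
    (hjacobi : ∀ a b c : C,
      bracket a (bracket b c) + bracket b (bracket c a) + bracket c (bracket a b) = 0)
    (hleibniz : ∀ a b c : C, bracket a (b * c) = bracket a b * c + b * bracket a c)
    -- `A` is closed under the bracket: `{A, A} ⊆ A`
    (hAbr : ∀ a b : A, ∃ c : A,
      bracket (algebraMap A C a) (algebraMap A C b) = algebraMap A C c)
    -- `t = tr_{C/A}` is the restriction to `C` of the field trace `Tr_{L/K}`
    (t : C → A)
    (ht : ∀ c : C, algebraMap A K (t c) = Algebra.trace K L (algebraMap C L c))
    (a : A) (c : C) :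
    algebraMap A C (t (bracket (algebraMap A C a) c))
      = bracket (algebraMap A C a) (algebraMap A C (t c)) := by
  classical
  set D : C →ₗ[k] C := bracket (algebraMap A C a) with hD
  -- the induced derivation on A
  choose δA hδA using hAbr a
  -- hδA : ∀ b, D (algebraMap A C b) = algebraMap A C (δA b)
  have hδA_add : ∀ x y : A, δA (x + y) = δA x + δA y := by
    intro x y
    apply hinj
    rw [map_add, ← hδA, ← hδA, ← hδA, map_add, map_add]
  have hδA_mul : ∀ x y : A, δA (x * y) = δA x * y + x * δA y := by
    intro x y
    apply hinj
    rw [← hδA, map_mul, hleibniz, hδA, hδA, map_add, map_mul, map_mul]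
  -- derivation-like maps into the fraction fields
  have hdCadd : ∀ x y : C, algebraMap C L (D (x + y))
      = algebraMap C L (D x) + algebraMap C L (D y) := fun x y => by
    rw [map_add, map_add]
  have hdCmul : ∀ x y : C, algebraMap C L (D (x * y))
      = algebraMap C L (D x) * algebraMap C L y + algebraMap C L x * algebraMap C L (D y) := by
    intro x y
    rw [hD, hleibniz, map_add, map_mul, map_mul]
  have hdAadd : ∀ x y : A, algebraMap A K (δA (x + y))
      = algebraMap A K (δA x) + algebraMap A K (δA y) := fun x y => by
    rw [hδA_add, map_add]
  have hdAmul : ∀ x y : A, algebraMap A K (δA (x * y))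
      = algebraMap A K (δA x) * algebraMap A K y + algebraMap A K x * algebraMap A K (δA y) :=
    fun x y => by rw [hδA_mul, map_add, map_mul, map_mul]
  obtain ⟨E, hEadd, hEmul, hEmap⟩ := deriv_extend_frac (fun c => algebraMap C L (D c))
    hdCadd hdCmul
  obtain ⟨e, headd, hemul, hemap⟩ := deriv_extend_frac (fun x => algebraMap A K (δA x))
    hdAadd hdAmul
  have hALinj : Function.Injective (algebraMap A L) := by
    rw [IsScalarTower.algebraMap_eq A K L]
    exact (algebraMap K L).injective.comp (IsFractionRing.injective A K)
  have hAL : ∀ r : A, algebraMap A L r = algebraMap C L (algebraMap A C r) := fun r =>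
    (IsScalarTower.algebraMap_apply A C L r)
  have hAKL : ∀ r : A, algebraMap K L (algebraMap A K r) = algebraMap A L r := fun r =>
    (IsScalarTower.algebraMap_apply A K L r).symm
  have hEAL : ∀ r : A, E (algebraMap A L r) = algebraMap A L (δA r) := by
    intro r
    rw [hAL r, hEmap, show D (algebraMap A C r) = algebraMap A C (δA r) from hδA r, ← hAL]
  -- compatibility of E and e
  have hcompat : ∀ κ : K, E (algebraMap K L κ) = algebraMap K L (e κ) := by
    intro κ
    obtain ⟨⟨x, y⟩, hxy⟩ := IsLocalization.surj (nonZeroDivisors A) κ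
    have hyne : algebraMap A L (y : A) ≠ 0 :=
      (map_ne_zero_iff _ hALinj).mpr (nonZeroDivisors.coe_ne_zero y)
    apply mul_right_cancel₀ hyne
    have hL : algebraMap K L κ * algebraMap A L (y : A) = algebraMap A L x := by
      rw [← hAKL, ← hAKL, ← map_mul, hxy]
    -- left side
    have h1 : E (algebraMap K L κ * algebraMap A L (y : A))
        = E (algebraMap K L κ) * algebraMap A L (y : A)
          + algebraMap K L κ * algebraMap A L (δA y) := by
      rw [hEmul, hEAL]
    rw [hL] at h1
    rw [hEAL] at h1
    -- right side
    have h2 : e κ * algebraMap A K (y : A) = algebraMap A K (δA x) - κ * algebraMap A K (δA y) := by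
      have := congrArg e hxy
      rw [hemul, hemap, hemap] at this
      linear_combination this
    have h2L := congrArg (algebraMap K L) h2
    rw [map_sub, map_mul, map_mul, hAKL, hAKL, hAKL] at h2L
    linear_combination -h1 - h2L
  -- main computation
  rw [hδA (t c)]
  refine congrArg (algebraMap A C) ?_
  apply IsFractionRing.injective A K
  rw [ht, show algebraMap C L (bracket (algebraMap A C a) c) = E (algebraMap C L c)
      from (hEmap c).symm,
    trace_deriv_comm E hEadd hEmul e headd hcompat, ← ht, hemap]
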